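/- Fix n ≥ 1 and d = 2, let β ≥ n²/π², let φ(t) = e^{βt}/β, and let the graph W be connected. If X ∈ ℝ^{2×n} with unit-norm columns is critical for f and has negative-semidefinite Hessian, then all columns of X are equal: x_1 = ⋯ = x_n. -/

import Mathlib

open Matrix

noncomputable section

/-- Frobenius inner product `⟨A,B⟩ = ∑ᵢⱼ Aᵢⱼ Bᵢⱼ`. -/
def frob {ι κ : Type*} [Fintype ι] [Fintype κ] (A B : Matrix ι κ ℝ) : ℝ :=
  ∑ i, ∑ j, A i j * B i j

/-- `ddiag` zeroes out all off-diagonal entries of a square matrix. -/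
def ddiag {ι : Type*} [Fintype ι] [DecidableEq ι] (M : Matrix ι ι ℝ) : Matrix ι ι ℝ :=
  Matrix.diagonal fun i => M i i

/-- Graph Laplacian `L(M) = diag(M 1) − M`. -/
def lap {ι : Type*} [Fintype ι] [DecidableEq ι] (M : Matrix ι ι ℝ) : Matrix ι ι ℝ :=
  Matrix.diagonal (fun i => ∑ j, M i j) - M

/-- `X` has unit-norm columns. -/
def unitCols {d : ℕ} {ι : Type*} [Fintype ι] (X : Matrix (Fin d) ι ℝ) : Prop :=
  ∀ j, ∑ i, X i j ^ 2 = 1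

/-- `A = W ⊙ φ'(XᵀX)` (`d1` playing the role of `φ'`). -/
def Amat {d : ℕ} {ι : Type*} [Fintype ι] (W : Matrix ι ι ℝ) (X : Matrix (Fin d) ι ℝ)
    (d1 : ℝ → ℝ) : Matrix ι ι ℝ :=
  Matrix.hadamard W ((Xᵀ * X).map d1)

/-- `S = ddiag(XᵀXA) − A`. -/
def Smat {d : ℕ} {ι : Type*} [Fintype ι] [DecidableEq ι] (W : Matrix ι ι ℝ)
    (X : Matrix (Fin d) ι ℝ) (d1 : ℝ → ℝ) : Matrix ι ι ℝ :=
  ddiag ((Xᵀ * X) * Amat W X d1) - Amat W X d1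

/-- First-order criticality: `X S = 0`, i.e. `X·ddiag(XᵀXA) = XA`
(vanishing Riemannian gradient on the product of spheres). -/
def IsCritical {d : ℕ} {ι : Type*} [Fintype ι] [DecidableEq ι] (W : Matrix ι ι ℝ)
    (X : Matrix (Fin d) ι ℝ) (d1 : ℝ → ℝ) : Prop :=
  X * Smat W X d1 = 0

/-- The Riemannian Hessian quadratic form of `f` at `X` is negative semidefinite:
`−⟨ẊᵀẊ, S⟩ + (1/2)⟨(XᵀẊ + ẊᵀX)^{⊙2}, W ⊙ φ''(XᵀX)⟩ ≤ 0` for all tangent `Ẋ`. -/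
def HessNegSemidef {d : ℕ} {ι : Type*} [Fintype ι] [DecidableEq ι] (W : Matrix ι ι ℝ)
    (X : Matrix (Fin d) ι ℝ) (d1 d2 : ℝ → ℝ) : Prop :=
  ∀ V : Matrix (Fin d) ι ℝ, (∀ j, (Xᵀ * V) j j = 0) →
    -(frob (Vᵀ * V) (Smat W X d1))
      + (1 / 2) * frob ((Xᵀ * V + Vᵀ * X).map fun t => t ^ 2)
          (Matrix.hadamard W ((Xᵀ * X).map d2)) ≤ 0

/-- The graph with an edge `{i,j}` whenever `w_ij > 0` is connected. -/
def ConnectedW {ι : Type*} (W : Matrix ι ι ℝ) : Prop :=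
  (SimpleGraph.fromRel fun i j => 0 < W i j).Connected

/-- `f(Y) = (1/2)⟨W, φ(YᵀY)⟩`. -/
def fval {d : ℕ} {ι : Type*} [Fintype ι] (W : Matrix ι ι ℝ) (φ : ℝ → ℝ)
    (Y : Matrix (Fin d) ι ℝ) : ℝ :=
  (1 / 2) * frob W ((Yᵀ * Y).map φ)

/-- `h(t) = tφ'(t) − (1−t²)φ''(t)`. -/
def hfun (d1 d2 : ℝ → ℝ) (t : ℝ) : ℝ := t * d1 t - (1 - t ^ 2) * d2 t

/-- The matrix `M` with `m_ij = w_ij · h(x_iᵀx_j)`. -/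
def Mmat {d : ℕ} {ι : Type*} [Fintype ι] (W : Matrix ι ι ℝ) (X : Matrix (Fin d) ι ℝ)
    (d1 d2 : ℝ → ℝ) : Matrix ι ι ℝ :=
  Matrix.of fun i j => W i j * hfun d1 d2 ((Xᵀ * X) i j)

/-- The kernel of `L` is exactly `span(1)`. -/
def KernelIsConst {ι : Type*} [Fintype ι] [DecidableEq ι] (L : Matrix ι ι ℝ) : Prop :=
  ∀ α : ι → ℝ, L.mulVec α = 0 ↔ ∃ c : ℝ, ∀ k, α k = c

/-- The regular `n`-gon configuration on the unit circle. -/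
def ngon (n : ℕ) : Matrix (Fin 2) (Fin n) ℝ :=
  Matrix.of fun a j =>
    if a = 0 then Real.cos (2 * Real.pi * (j : ℝ) / (n : ℝ))
    else Real.sin (2 * Real.pi * (j : ℝ) / (n : ℝ))

/-- The log-sum-exp smoothing `φ_{ε,τ}(t) = ε·log(1 + e^{(t−τ)/ε})` of the ReLU. -/
def philse (ε τ : ℝ) : ℝ → ℝ := fun t => ε * Real.log (1 + Real.exp ((t - τ) / ε))


open Real


lemma deriv_expbeta (β : ℝ) (hβ : β ≠ 0) :
    (deriv fun t => Real.exp (β * t) / β) = fun t => Real.exp (β * t) := by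
  funext t
  have h : HasDerivAt (fun t => Real.exp (β * t) / β) (Real.exp (β * t)) t := by
    have h1 : HasDerivAt (fun t : ℝ => β * t) β t := by
      simpa using (hasDerivAt_id t).const_mul β
    have h2 := (h1.exp).div_const β
    rw [mul_div_assoc, div_self hβ, mul_one] at h2
    exact h2
  exact h.deriv

lemma deriv_expbeta' (β : ℝ) :
    (deriv fun t => Real.exp (β * t)) = fun t => β * Real.exp (β * t) := by
  funext t
  have h1 : HasDerivAt (fun t : ℝ => β * t) β t := by
    simpa using (hasDerivAt_id t).const_mul β
  simpa [mul_comm] using (h1.exp).deriv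

lemma core_ineq {n : ℕ} (hn : 1 ≤ n) :
    Real.cos (π / n) < (n : ℝ) ^ 2 / π ^ 2 * Real.sin (π / n) ^ 2 := by
  have hπ := Real.pi_pos
  have hn0 : (0:ℝ) < n := by exact_mod_cast hn
  obtain h4 | h4 : n ≤ 3 ∨ 4 ≤ n := by omega
  · interval_cases n
    · simp [Real.cos_pi, Real.sin_pi]
    · push_cast
      rw [show π / 2 = π/2 by norm_num, Real.cos_pi_div_two, Real.sin_pi_div_two]
      positivity
    · push_cast
      rw [show π / 3 = π/3 by norm_num, Real.cos_pi_div_three, Real.sin_pi_div_three]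
      have h315 := Real.pi_lt_d2
      have : Real.sqrt 3 ^ 2 = 3 := Real.sq_sqrt (by norm_num)
      rw [div_pow, this]
      rw [show (3:ℝ)^2/π^2*(3/2^2) = 27/(4*π^2) by ring, lt_div_iff₀ (by positivity)]
      nlinarith
  · set s := π / n with hs
    have hs0 : 0 < s := by positivity
    have hs1 : s ≤ 1 := by
      rw [hs, div_le_one hn0]
      calc π ≤ 4 := Real.pi_le_four
      _ ≤ n := by exact_mod_cast h4
    have hnπ : (n:ℝ)^2/π^2 = 1/s^2 := by
      rw [hs]
      field_simp
    rw [hnπ, one_div, ← div_eq_inv_mul, lt_div_iff₀ (by positivity)]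
    have hsin : s - s^3/4 < Real.sin s := by
      have := Real.sin_gt_sub_cube hs0; nlinarith [pow_pos hs0 3]
    have hsinpos : 0 < s - s^3/4 := by nlinarith
    have hcos : Real.cos s ≤ 1 - s^2/2 + |s|^4 * (5/96) := by
      have := Real.cos_bound (x := s) (by rwa [abs_of_pos hs0])
      have := abs_le.1 this
      linarith [this.2]
    rw [abs_of_pos hs0] at hcos
    nlinarith [sq_nonneg s, sq_nonneg (s^2)]

lemma key_ineq_aux {n : ℕ} (hn : 1 ≤ n) {β : ℝ} (hβ : (n:ℝ)^2/π^2 ≤ β)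
    {u : ℝ} (h1 : π/n ≤ u) (hu : u ≤ π) :
    Real.cos u < β * Real.sin u ^ 2 := by
  have hπ := Real.pi_pos
  have hn0 : (0:ℝ) < n := by exact_mod_cast hn
  have hβ0 : 0 < β := lt_of_lt_of_le (by positivity) hβ
  have hn1 : (1:ℝ) ≤ n := by exact_mod_cast hn
  have hpn : 0 < π / (n:ℝ) := by positivity
  have hpn2 : π / (n:ℝ) ≤ π := by
    rw [div_le_iff₀ hn0]; nlinarith
  rcases le_total u (π/2) with huh | huh
  · have hsn : Real.sin (π/n) ≤ Real.sin u := by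
      rcases eq_or_lt_of_le h1 with h1' | h1'
      · rw [h1']
      · exact le_of_lt (Real.strictMonoOn_sin
          ⟨by linarith, by linarith⟩ ⟨by linarith, huh⟩ h1')
    have hcu : Real.cos u ≤ Real.cos (π/n) := by
      rcases eq_or_lt_of_le h1 with h1' | h1'
      · rw [h1']
      · exact le_of_lt (Real.strictAntiOn_cos
          ⟨by linarith, by linarith⟩ ⟨by linarith, hu⟩ h1')
    have hsnn : 0 ≤ Real.sin (π/n) :=
      Real.sin_nonneg_of_nonneg_of_le_pi (by linarith) (by linarith)
    have hkey := core_ineq hn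
    calc Real.cos u ≤ Real.cos (π/n) := hcu
      _ < (n:ℝ)^2/π^2 * Real.sin (π/n)^2 := hkey
      _ ≤ β * Real.sin u ^ 2 := by
          apply mul_le_mul hβ (by nlinarith) (by positivity) hβ0.le
  · rcases eq_or_lt_of_le hu with h | hu'
    · rw [h]
      rw [Real.cos_pi, Real.sin_pi]
      norm_num
    · have hcos : Real.cos u ≤ 0 := Real.cos_nonpos_of_pi_div_two_le_of_le huh (by linarith)
      have hsin : 0 < Real.sin u := Real.sin_pos_of_pos_of_lt_pi (by linarith) hu'
      calc Real.cos u ≤ 0 := hcos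
        _ < β * Real.sin u ^ 2 := by positivity

lemma key_ineq {n : ℕ} (hn : 1 ≤ n) {β : ℝ} (hβ : (n:ℝ)^2/π^2 ≤ β)
    {u : ℝ} (h1 : π/n ≤ u) (h2 : u ≤ 2*π - π/n) :
    Real.cos u < β * Real.sin u ^ 2 := by
  have hπ := Real.pi_pos
  have hn0 : (0:ℝ) < n := by exact_mod_cast hn
  rcases le_total u π with hu | hu
  · exact key_ineq_aux hn hβ h1 hu
  · have := key_ineq_aux hn hβ (u := 2*π - u) (by linarith) (by linarith)
    calc Real.cos u = Real.cos (2*π - u) := by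
          rw [Real.cos_sub, Real.cos_two_pi, Real.sin_two_pi]; ring
      _ < β * Real.sin (2*π - u)^2 := this
      _ = β * Real.sin u ^2 := by
          rw [Real.sin_sub, Real.cos_two_pi, Real.sin_two_pi]; ring_nf

lemma spread_lemma {n : ℕ} (hn : 1 ≤ n) (ψ : Fin n → ℝ) (E : Fin n → Fin n → Prop)
    (δ : ℝ) (hδ : 0 < δ)
    (hE : ∀ i j, E i j → |ψ i - ψ j| < δ)
    (hprop : ∀ S : Finset (Fin n), S.Nonempty → (∀ i ∈ S, ∀ j, E i j → j ∈ S) →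
      S = Finset.univ)
    (i₀ : Fin n) :
    ∀ j, ψ j < ψ i₀ + n * δ := by
  classical
  set T : ℕ → Finset (Fin n) :=
    fun k => Finset.univ.filter (fun j => ψ j < ψ i₀ + (k : ℝ) * δ) with hT
  have key : ∀ k : ℕ, T (k+1) = Finset.univ ∨ (k+1) ≤ (T (k+1)).card := by
    intro k
    induction k with
    | zero =>
      right
      have : i₀ ∈ T 1 := by
        simp [hT]
        nlinarith
      calc 1 ≤ ({i₀} : Finset (Fin n)).card := by simp
        _ ≤ (T 1).card := Finset.card_le_card (by simp [this])
    | succ k ih =>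
      have hmono : T (k+1) ⊆ T (k+2) := by
        intro j hj
        simp [hT] at hj ⊢
        push_cast
        nlinarith
      rcases ih with h | h
      · left
        exact Finset.univ_subset_iff.mp (h ▸ hmono)
      · by_cases huniv : T (k+1) = Finset.univ
        · left
          exact Finset.univ_subset_iff.mp (huniv ▸ hmono)
        · right
          have hne : (T (k+1)).Nonempty := Finset.card_pos.mp (by omega)
          have hnotclosed : ¬ (∀ i ∈ T (k+1), ∀ j, E i j → j ∈ T (k+1)) := by
            intro hc
            exact huniv (hprop _ hne hc)
          push_neg at hnotclosed
          obtain ⟨i, hi, j, hij, hj⟩ := hnotclosed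
          have hji : j ∈ T (k+2) := by
            simp [hT] at hi ⊢
            have := hE i j hij
            have habs := abs_lt.mp this
            push_cast
            nlinarith [habs.1, habs.2]
          have hins : insert j (T (k+1)) ⊆ T (k+2) := by
            intro z hz
            rcases Finset.mem_insert.mp hz with rfl | hz
            · exact hji
            · exact hmono hz
          have hc2 : k + 2 ≤ (insert j (T (k+1))).card := by
            rw [Finset.card_insert_of_notMem hj]; omega
          exact le_trans hc2 (Finset.card_le_card hins)
  have hfin : T n = Finset.univ := by
    obtain ⟨m, rfl⟩ : ∃ m, n = m + 1 := ⟨n - 1, by omega⟩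
    rcases key m with h | h
    · exact h
    · apply Finset.eq_univ_of_card
      have := Finset.card_le_univ (T (m+1))
      simp at this ⊢
      omega
  intro j
  have : j ∈ T n := hfin ▸ Finset.mem_univ j
  simpa [hT] using this

lemma exists_gap {L : ℝ} (hL : 0 < L) {n : ℕ} (hn : 1 ≤ n) (A : Finset ℝ)
    (hA : A.Nonempty) (hcard : A.card ≤ n) (hsub : ∀ a ∈ A, 0 ≤ a ∧ a < L) :
    ∃ c ∈ A, ∀ a ∈ A,
      ¬(c < a ∧ a < c + L/n) ∧ ¬(c < a + L ∧ a + L < c + L/n) := by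
  classical
  by_contra hcon
  set δ : ℝ := L / n with hδdef
  have hn0 : (0:ℝ) < n := by exact_mod_cast hn
  have hδ : 0 < δ := by positivity
  have hnδ : (n:ℝ) * δ = L := by rw [hδdef]; field_simp
  set F : Finset ℝ := A ∪ A.image (· + L) ∪ A.image (· + 2*L) with hF
  have hcon' : ∀ c ∈ A, ∃ a ∈ A,
      (c < a ∧ a < c + δ) ∨ (c < a + L ∧ a + L < c + δ) := by
    intro c hc
    by_contra h
    refine hcon ⟨c, hc, fun a ha => ?_⟩
    constructor
    · intro hh
      exact h ⟨a, ha, Or.inl hh⟩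
    · intro hh
      exact h ⟨a, ha, Or.inr hh⟩
  -- step property
  have hstep : ∀ x ∈ A ∪ A.image (· + L), ∃ y ∈ F, x < y ∧ y < x + δ := by
    intro x hx
    rcases Finset.mem_union.mp hx with hx | hx
    · obtain ⟨a, ha, hcase⟩ := hcon' x hx
      rcases hcase with ⟨h1, h2⟩ | ⟨h1, h2⟩
      · exact ⟨a, Finset.mem_union.mpr (Or.inl (Finset.mem_union.mpr (Or.inl ha))), h1, h2⟩
      · exact ⟨a + L, by
          simp only [hF, Finset.mem_union, Finset.mem_image]
          exact Or.inl (Or.inr ⟨a, ha, rfl⟩), h1, h2⟩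
    · obtain ⟨a', ha', rfl⟩ := Finset.mem_image.mp hx
      obtain ⟨a, ha, hcase⟩ := hcon' a' ha'
      rcases hcase with ⟨h1, h2⟩ | ⟨h1, h2⟩
      · refine ⟨a + L, ?_, by linarith, by linarith⟩
        simp only [hF, Finset.mem_union, Finset.mem_image]
        exact Or.inl (Or.inr ⟨a, ha, rfl⟩)
      · refine ⟨a + 2*L, ?_, by linarith, by linarith⟩
        simp only [hF, Finset.mem_union, Finset.mem_image]
        exact Or.inr ⟨a, ha, by ring⟩
  set c₀ : ℝ := A.min' hA with hc₀
  have hc₀A : c₀ ∈ A := A.min'_mem hA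
  have hc₀L : 0 ≤ c₀ ∧ c₀ < L := hsub _ hc₀A
  -- elements of F below c₀ + L are in A ∪ A+L
  have hlow : ∀ x ∈ F, x < c₀ + L → x ∈ A ∪ A.image (· + L) := by
    intro x hx hxL
    rcases Finset.mem_union.mp hx with hx | hx
    · exact hx
    · obtain ⟨a, ha, rfl⟩ := Finset.mem_image.mp hx
      have := (hsub a ha).1
      linarith [hc₀L.2]
  -- chain
  have chain : ∀ k : ℕ, k ≤ n → ∃ x ∈ F, c₀ ≤ x ∧ x ≤ c₀ + k * δ ∧ x < c₀ + L ∧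
      (k+1) ≤ (F.filter (fun z => c₀ ≤ z ∧ z ≤ x)).card := by
    intro k
    induction k with
    | zero =>
      intro _
      refine ⟨c₀, by simp [hF, Finset.mem_union, hc₀A], le_refl _, by simp, by linarith [hc₀L.2, hL], ?_⟩
      have : c₀ ∈ F.filter (fun z => c₀ ≤ z ∧ z ≤ c₀) := by
        simp [hF, Finset.mem_union, hc₀A]
      calc 0 + 1 ≤ ({c₀} : Finset ℝ).card := by simp
        _ ≤ _ := Finset.card_le_card (by simp [this])
    | succ k ih =>
      intro hk
      obtain ⟨x, hxF, hx1, hx2, hx3, hx4⟩ := ih (by omega)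
      obtain ⟨y, hyF, hy1, hy2⟩ := hstep x (hlow x hxF hx3)
      have hkn : (k:ℝ) + 1 ≤ n := by exact_mod_cast hk
      have hy3 : y ≤ c₀ + (k+1 : ℕ) * δ := by push_cast; nlinarith
      have hy4 : y < c₀ + L := by
        have : (k:ℝ) * δ + δ ≤ (n:ℝ) * δ := by nlinarith
        nlinarith
      refine ⟨y, hyF, by linarith, hy3, hy4, ?_⟩
      have hsubset : insert y (F.filter (fun z => c₀ ≤ z ∧ z ≤ x)) ⊆
          F.filter (fun z => c₀ ≤ z ∧ z ≤ y) := by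
        intro z hz
        rcases Finset.mem_insert.mp hz with rfl | hz
        · simp only [Finset.mem_filter]
          exact ⟨hyF, by linarith, le_refl _⟩
        · simp only [Finset.mem_filter] at hz ⊢
          exact ⟨hz.1, hz.2.1, by linarith [hz.2.2]⟩
      have hynotmem : y ∉ F.filter (fun z => c₀ ≤ z ∧ z ≤ x) := by
        simp only [Finset.mem_filter]
        push_neg
        intro _ _
        linarith
      have : k + 2 ≤ (insert y (F.filter (fun z => c₀ ≤ z ∧ z ≤ x))).card := by
        rw [Finset.card_insert_of_notMem hynotmem]; omega
      exact le_trans this (Finset.card_le_card hsubset)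
  obtain ⟨x, hxF, hx1, _, hx3, hx4⟩ := chain n (le_refl n)
  -- injection into A
  have hcardle : (F.filter (fun z => c₀ ≤ z ∧ z ≤ x)).card ≤ A.card := by
    apply Finset.card_le_card_of_injOn
      (fun z => if z < L then z else if z < 2*L then z - L else z - 2*L)
    · intro z hz
      simp only [Finset.mem_coe, Finset.mem_filter] at hz
      obtain ⟨hzF, hz1, hz2⟩ := hz
      rcases Finset.mem_union.mp hzF with hzF' | hzF'
      · rcases Finset.mem_union.mp hzF' with hzA | hzA
        · have := hsub z hzA
          simp [this.2]
          exact hzA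
        · obtain ⟨a, ha, rfl⟩ := Finset.mem_image.mp hzA
          have := hsub a ha
          have h1 : ¬ (a + L < L) := by linarith [this.1]
          have h2 : a + L < 2*L := by linarith [this.2]
          simp [h1, h2]
          simpa using ha
      · obtain ⟨a, ha, rfl⟩ := Finset.mem_image.mp hzF'
        have := hsub a ha
        have h1 : ¬ (a + 2*L < L) := by linarith [this.1]
        have h2 : ¬ (a + 2*L < 2*L) := by linarith [this.1]
        simp [h1, h2]
        simpa using ha
    · intro z₁ hz₁ z₂ hz₂ heq
      simp only [Finset.mem_coe, Finset.mem_filter] at hz₁ hz₂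
      have hb₁ : c₀ ≤ z₁ ∧ z₁ < c₀ + L := ⟨hz₁.2.1, lt_of_le_of_lt hz₁.2.2 hx3⟩
      have hb₂ : c₀ ≤ z₂ ∧ z₂ < c₀ + L := ⟨hz₂.2.1, lt_of_le_of_lt hz₂.2.2 hx3⟩
      by_cases c11 : z₁ < L <;> by_cases c12 : z₁ < 2*L <;>
        by_cases c21 : z₂ < L <;> by_cases c22 : z₂ < 2*L <;>
        simp [c11, c12, c21, c22] at heq <;> linarith [hb₁.1, hb₁.2, hb₂.1, hb₂.2]
  have := le_trans hx4 hcardle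
  omega

open Real in
lemma Tmat_apply {n : ℕ} (θ : Fin n → ℝ) (X : Matrix (Fin 2) (Fin n) ℝ)
    (hX0 : ∀ j, X 0 j = Real.cos (θ j)) (hX1 : ∀ j, X 1 j = Real.sin (θ j))
    (p q : Fin n) : (Xᵀ * X) p q = Real.cos (θ p - θ q) := by
  rw [Matrix.mul_apply, Fin.sum_univ_two, Matrix.transpose_apply, Matrix.transpose_apply,
    hX0, hX0, hX1, hX1, Real.cos_sub]

open Real in
lemma Smat_apply {n : ℕ} (β : ℝ) (W : Matrix (Fin n) (Fin n) ℝ) (θ : Fin n → ℝ)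
    (X : Matrix (Fin 2) (Fin n) ℝ)
    (hX0 : ∀ j, X 0 j = Real.cos (θ j)) (hX1 : ∀ j, X 1 j = Real.sin (θ j))
    (i j : Fin n) :
    Smat W X (fun t => Real.exp (β * t)) i j =
      (if i = j then
        ∑ k, Real.cos (θ i - θ k) * (W k i * Real.exp (β * Real.cos (θ k - θ i))) else 0)
        - W i j * Real.exp (β * Real.cos (θ i - θ j)) := by
  rw [Smat, Amat]
  simp only [ddiag, Matrix.sub_apply, Matrix.diagonal_apply, Matrix.hadamard_apply,
    Matrix.map_apply]
  congr 1
  · by_cases h : i = j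
    · subst h
      rw [if_pos rfl, if_pos rfl, Matrix.mul_apply]
      apply Finset.sum_congr rfl
      intro k _
      rw [Matrix.hadamard_apply, Matrix.map_apply, Tmat_apply θ X hX0 hX1,
        Tmat_apply θ X hX0 hX1]
    · simp [h]
  · rw [Tmat_apply θ X hX0 hX1]

open Real in
lemma crit_sum {n : ℕ} (β : ℝ) (W : Matrix (Fin n) (Fin n) ℝ) (θ : Fin n → ℝ)
    (X : Matrix (Fin 2) (Fin n) ℝ)
    (hX0 : ∀ j, X 0 j = Real.cos (θ j)) (hX1 : ∀ j, X 1 j = Real.sin (θ j))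
    (hcrit : X * Smat W X (fun t => Real.exp (β * t)) = 0) (i : Fin n) :
    ∑ j, (W j i * Real.exp (β * Real.cos (θ j - θ i))) * Real.sin (θ j - θ i) = 0 := by
  have h0 := congrFun (congrFun hcrit 0) i
  have h1 := congrFun (congrFun hcrit 1) i
  rw [Matrix.mul_apply] at h0 h1
  have hz : (0 : Matrix (Fin 2) (Fin n) ℝ) 0 i = 0 := rfl
  have hz1 : (0 : Matrix (Fin 2) (Fin n) ℝ) 1 i = 0 := rfl
  rw [hz] at h0
  rw [hz1] at h1
  have hcomb : ∑ j, Smat W X (fun t => Real.exp (β * t)) j i * Real.sin (θ j - θ i)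
      = Real.cos (θ i) * (∑ j, X 1 j * Smat W X (fun t => Real.exp (β * t)) j i)
        - Real.sin (θ i) * (∑ j, X 0 j * Smat W X (fun t => Real.exp (β * t)) j i) := by
    rw [Finset.mul_sum, Finset.mul_sum, ← Finset.sum_sub_distrib]
    apply Finset.sum_congr rfl
    intro j _
    rw [hX0, hX1, Real.sin_sub]
    ring
  rw [h0, h1, mul_zero, mul_zero, sub_zero] at hcomb
  have hexp : ∑ j, Smat W X (fun t => Real.exp (β * t)) j i * Real.sin (θ j - θ i)
      = -(∑ j, (W j i * Real.exp (β * Real.cos (θ j - θ i))) * Real.sin (θ j - θ i)) := by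
    rw [← Finset.sum_neg_distrib]
    apply Finset.sum_congr rfl
    intro j _
    rw [Smat_apply β W θ X hX0 hX1]
    by_cases h : j = i
    · subst h
      simp
    · simp [h]
  rw [hexp] at hcomb
  linarith

open Real in
lemma hess_sum {n : ℕ} (β : ℝ) (W : Matrix (Fin n) (Fin n) ℝ) (hWsymm : W.IsSymm)
    (θ : Fin n → ℝ) (X : Matrix (Fin 2) (Fin n) ℝ)
    (hX0 : ∀ j, X 0 j = Real.cos (θ j)) (hX1 : ∀ j, X 1 j = Real.sin (θ j))
    (hh : HessNegSemidef W X (fun t => Real.exp (β * t)) (fun t => β * Real.exp (β * t)))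
    (a : Fin n → ℝ) :
    0 ≤ ∑ i, ∑ j, (a i - a j)^2 *
      (W i j * Real.exp (β * Real.cos (θ i - θ j)) *
        (Real.cos (θ i - θ j) - β * (1 - Real.cos (θ i - θ j)^2))) := by
  classical
  have hWs : ∀ i j, W j i = W i j := by
    intro i j
    have := congrFun (congrFun hWsymm j) i
    simpa [Matrix.transpose_apply] using this.symm
  have hceven : ∀ i j, Real.cos (θ j - θ i) = Real.cos (θ i - θ j) := by
    intro i j
    rw [show θ j - θ i = -(θ i - θ j) by ring, Real.cos_neg]
  have hsin2 : ∀ i j, Real.sin (θ i - θ j)^2 = 1 - Real.cos (θ i - θ j)^2 := by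
    intro i j
    have := Real.sin_sq_add_cos_sq (θ i - θ j)
    linarith
  set V : Matrix (Fin 2) (Fin n) ℝ :=
    Matrix.of (fun b j => if b = 0 then -(a j * Real.sin (θ j)) else a j * Real.cos (θ j))
    with hV
  have hV0 : ∀ j, V 0 j = -(a j * Real.sin (θ j)) := by intro j; simp [hV]
  have hV1 : ∀ j, V 1 j = a j * Real.cos (θ j) := by
    intro j
    simp [hV]
  have hXV : ∀ i j, (Xᵀ * V) i j = a j * Real.sin (θ i - θ j) := by
    intro i j
    rw [Matrix.mul_apply, Fin.sum_univ_two, Matrix.transpose_apply, Matrix.transpose_apply,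
      hX0, hX1, hV0, hV1, Real.sin_sub]
    ring
  have hVX : ∀ i j, (Vᵀ * X) i j = -(a i * Real.sin (θ i - θ j)) := by
    intro i j
    rw [Matrix.mul_apply, Fin.sum_univ_two, Matrix.transpose_apply, Matrix.transpose_apply,
      hX0, hX1, hV0, hV1, Real.sin_sub]
    ring
  have hVV : ∀ i j, (Vᵀ * V) i j = a i * a j * Real.cos (θ i - θ j) := by
    intro i j
    rw [Matrix.mul_apply, Fin.sum_univ_two, Matrix.transpose_apply, Matrix.transpose_apply,
      hV0, hV0, hV1, hV1, Real.cos_sub]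
    ring
  have htan : ∀ j, (Xᵀ * V) j j = 0 := by
    intro j
    rw [hXV, sub_self, Real.sin_zero, mul_zero]
  have H := hh V htan
  set D : Fin n → ℝ :=
    fun i => ∑ k, Real.cos (θ i - θ k) * (W k i * Real.exp (β * Real.cos (θ k - θ i)))
    with hD
  have e1 : frob (Vᵀ * V) (Smat W X (fun t => Real.exp (β * t)))
      = (∑ i, a i * a i * D i)
        - ∑ i, ∑ j, a i * a j * Real.cos (θ i - θ j)
            * (W i j * Real.exp (β * Real.cos (θ i - θ j))) := by
    rw [frob, ← Finset.sum_sub_distrib]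
    apply Finset.sum_congr rfl
    intro i _
    have hterm : ∀ j, (Vᵀ * V) i j * Smat W X (fun t => Real.exp (β * t)) i j
        = (if i = j then a i * a i * D i else 0)
          - a i * a j * Real.cos (θ i - θ j)
            * (W i j * Real.exp (β * Real.cos (θ i - θ j))) := by
      intro j
      rw [hVV, Smat_apply β W θ X hX0 hX1]
      by_cases h : i = j
      · subst h
        rw [if_pos rfl, if_pos rfl, sub_self, Real.cos_zero]
        ring
      · rw [if_neg h, if_neg h]
        ring
    calc ∑ j, (Vᵀ * V) i j * Smat W X (fun t => Real.exp (β * t)) i j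
        = ∑ j, ((if i = j then a i * a i * D i else 0)
          - a i * a j * Real.cos (θ i - θ j)
            * (W i j * Real.exp (β * Real.cos (θ i - θ j)))) :=
          Finset.sum_congr rfl (fun j _ => hterm j)
      _ = (∑ j, (if i = j then a i * a i * D i else 0))
          - ∑ j, a i * a j * Real.cos (θ i - θ j)
            * (W i j * Real.exp (β * Real.cos (θ i - θ j))) := Finset.sum_sub_distrib _ _
      _ = _ := by rw [Finset.sum_ite_eq]; simp
  have e2 : frob ((Xᵀ * V + Vᵀ * X).map fun t => t ^ 2)
        (Matrix.hadamard W ((Xᵀ * X).map fun t => β * Real.exp (β * t)))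
      = ∑ i, ∑ j, (a i - a j)^2 * (1 - Real.cos (θ i - θ j)^2)
          * (W i j * (β * Real.exp (β * Real.cos (θ i - θ j)))) := by
    rw [frob]
    apply Finset.sum_congr rfl
    intro i _
    apply Finset.sum_congr rfl
    intro j _
    rw [Matrix.map_apply, Matrix.add_apply, hXV, hVX, Matrix.hadamard_apply,
      Matrix.map_apply, Tmat_apply θ X hX0 hX1]
    have hs := hsin2 i j
    linear_combination (W i j * (β * Real.exp (β * Real.cos (θ i - θ j))))
      * (a i - a j)^2 * hs
  rw [e1, e2] at H
  -- reorient the diagonal sum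
  have hP : (∑ i, a i * a i * D i)
      = ∑ i, ∑ j, a i * a i * (Real.cos (θ i - θ j)
          * (W i j * Real.exp (β * Real.cos (θ i - θ j)))) := by
    apply Finset.sum_congr rfl
    intro i _
    rw [hD, Finset.mul_sum]
    apply Finset.sum_congr rfl
    intro k _
    rw [hWs k i, hceven k i]
  have hPswap : (∑ i, ∑ j, a j * a j * (Real.cos (θ i - θ j)
          * (W i j * Real.exp (β * Real.cos (θ i - θ j)))))
      = ∑ i, ∑ j, a i * a i * (Real.cos (θ i - θ j)
          * (W i j * Real.exp (β * Real.cos (θ i - θ j)))) := by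
    rw [Finset.sum_comm]
    apply Finset.sum_congr rfl
    intro i _
    apply Finset.sum_congr rfl
    intro j _
    rw [hWs j i, hceven j i]
  have hsplit : (∑ i, ∑ j, (a i - a j)^2 *
      (W i j * Real.exp (β * Real.cos (θ i - θ j)) *
        (Real.cos (θ i - θ j) - β * (1 - Real.cos (θ i - θ j)^2))))
      = ((∑ i, ∑ j, a i * a i * (Real.cos (θ i - θ j)
            * (W i j * Real.exp (β * Real.cos (θ i - θ j)))))
        + (∑ i, ∑ j, a j * a j * (Real.cos (θ i - θ j)
            * (W i j * Real.exp (β * Real.cos (θ i - θ j))))))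
        - 2 * (∑ i, ∑ j, a i * a j * Real.cos (θ i - θ j)
            * (W i j * Real.exp (β * Real.cos (θ i - θ j))))
        - ∑ i, ∑ j, (a i - a j)^2 * (1 - Real.cos (θ i - θ j)^2)
            * (W i j * (β * Real.exp (β * Real.cos (θ i - θ j)))) := by
    rw [← Finset.sum_add_distrib, Finset.mul_sum, ← Finset.sum_sub_distrib,
      ← Finset.sum_sub_distrib]
    apply Finset.sum_congr rfl
    intro i _
    rw [← Finset.sum_add_distrib, Finset.mul_sum, ← Finset.sum_sub_distrib,
      ← Finset.sum_sub_distrib]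
    apply Finset.sum_congr rfl
    intro j _
    ring
  rw [hsplit, hPswap, ← hP]
  linarith


lemma wconn_prop {n : ℕ} {W : Matrix (Fin n) (Fin n) ℝ} (hWsymm : W.IsSymm)
    (hconn : ConnectedW W) :
    ∀ S : Finset (Fin n), S.Nonempty → (∀ i ∈ S, ∀ j, 0 < W i j → j ∈ S) →
      S = Finset.univ := by
  intro S hS hclosed
  have hWs : ∀ i j, W j i = W i j := by
    intro i j
    have := congrFun (congrFun hWsymm j) i
    simpa [Matrix.transpose_apply] using this.symm
  obtain ⟨i₀, hi₀⟩ := hS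
  apply Finset.eq_univ_of_forall
  intro v
  obtain ⟨p⟩ := hconn.preconnected i₀ v
  suffices H : ∀ (u v : Fin n)
      (_ : (SimpleGraph.fromRel fun i j => 0 < W i j).Walk u v), u ∈ S → v ∈ S by
    exact H i₀ v p hi₀
  intro u v p
  induction p with
  | nil => exact id
  | cons h q ih =>
    intro hu
    apply ih
    rw [SimpleGraph.fromRel_adj] at h
    rcases h.2 with h1 | h1
    · exact hclosed _ hu _ h1
    · exact hclosed _ hu _ (by rw [← hWs]; exact h1)

/-- Corollary 3, large `β`: on the circle with a connected graph and
`φ(t) = e^{βt}/β`, `β ≥ n²/π²`, second-order critical points are synchronized. -/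
theorem synchronization_circle_exponential_large_beta
    {n : ℕ} (hn : 1 ≤ n)
    (β : ℝ) (hβ : (n : ℝ) ^ 2 / Real.pi ^ 2 ≤ β)
    (W : Matrix (Fin n) (Fin n) ℝ) (hWsymm : W.IsSymm) (hWnonneg : ∀ i j, 0 ≤ W i j)
    (hconn : ConnectedW W)
    (X : Matrix (Fin 2) (Fin n) ℝ) (hX : unitCols X)
    (hcrit : IsCritical W X (deriv fun t => Real.exp (β * t) / β))
    (hhess : HessNegSemidef W X (deriv fun t => Real.exp (β * t) / β)
      (deriv (deriv fun t => Real.exp (β * t) / β))) :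
    ∀ j j' : Fin n, ∀ i, X i j = X i j' := by
  classical
  have hπ := Real.pi_pos
  have hn0 : (0:ℝ) < n := by exact_mod_cast hn
  have hβ0 : 0 < β := lt_of_lt_of_le (by positivity) hβ
  have hβne : β ≠ 0 := ne_of_gt hβ0
  rw [deriv_expbeta β hβne] at hcrit hhess
  rw [deriv_expbeta' β] at hhess
  -- extract angles
  have hang : ∀ j, ∃ t : ℝ, X 0 j = Real.cos t ∧ X 1 j = Real.sin t := by
    intro j
    have h2 := hX j
    rw [Fin.sum_univ_two] at h2
    set z : ℂ := ⟨X 0 j, X 1 j⟩ with hz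
    have hnsq : Complex.normSq z = 1 := by
      rw [hz, Complex.normSq_mk]
      nlinarith
    have habs : ‖z‖ = 1 := by
      have h3 : ‖z‖ ^ 2 = 1 := by rw [Complex.sq_norm, hnsq]
      nlinarith [norm_nonneg z]
    have hz0 : z ≠ 0 := by
      intro h
      rw [h] at habs
      simp at habs
    refine ⟨Complex.arg z, ?_, ?_⟩
    · rw [Complex.cos_arg hz0, habs]
      simp [hz]
    · rw [Complex.sin_arg, habs]
      simp [hz]
  choose θ hθ0 hθ1 using hang
  have hWclosed := wconn_prop hWsymm hconn
  have hWs : ∀ i j, W j i = W i j := by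
    intro i j
    have := congrFun (congrFun hWsymm j) i
    simpa [Matrix.transpose_apply] using this.symm
  have hceven : ∀ i j, Real.cos (θ j - θ i) = Real.cos (θ i - θ j) := by
    intro i j
    rw [show θ j - θ i = -(θ i - θ j) by ring, Real.cos_neg]
  -- the short-edge relation
  set E : Fin n → Fin n → Prop := fun i j => 0 < W i j ∧
    0 ≤ Real.cos (θ i - θ j) - β * (1 - Real.cos (θ i - θ j)^2) with hE
  -- E-closed sets are everything
  have hEprop : ∀ S : Finset (Fin n), S.Nonempty →
      (∀ i ∈ S, ∀ j, E i j → j ∈ S) → S = Finset.univ := by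
    intro S hS hclosed
    apply hWclosed S hS
    intro i hi j hWij
    by_contra hj
    set a : Fin n → ℝ := fun k => if k ∈ S then 1 else 0 with ha
    set t : Fin n → Fin n → ℝ := fun p q => (a p - a q)^2 *
      (W p q * Real.exp (β * Real.cos (θ p - θ q)) *
        (Real.cos (θ p - θ q) - β * (1 - Real.cos (θ p - θ q)^2))) with ht
    have hG : 0 ≤ ∑ p, ∑ q, t p q := hess_sum β W hWsymm θ X hθ0 hθ1 hhess a
    have hcross : ∀ p q, p ∈ S → q ∉ S → t p q ≤ 0 ∧ (t p q = 0 → 0 < W p q → E p q) := by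
      intro p q hp hq
      have hnE : ¬ E p q := fun h => hq (hclosed p hp q h)
      have ha1 : (a p - a q)^2 = 1 := by simp [ha, hp, hq]
      rcases le_or_gt (W p q) 0 with hW | hW
      · have hW0 : W p q = 0 := le_antisymm hW (hWnonneg p q)
        constructor
        · simp only [ht, hW0]; simp
        · intro _ h
          rw [hW0] at h
          exact absurd h (lt_irrefl 0)
      · have hneg : Real.cos (θ p - θ q) - β * (1 - Real.cos (θ p - θ q)^2) < 0 := by
          by_contra hcon
          push_neg at hcon
          exact hnE ⟨hW, hcon⟩
        constructor
        · simp only [ht]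
          rw [ha1, one_mul]
          exact le_of_lt (mul_neg_of_pos_of_neg
            (mul_pos hW (Real.exp_pos (β * Real.cos (θ p - θ q)))) hneg)
        · intro h0 _
          simp only [ht] at h0
          rw [ha1, one_mul] at h0
          exact absurd h0 (ne_of_lt (mul_neg_of_pos_of_neg
            (mul_pos hW (Real.exp_pos (β * Real.cos (θ p - θ q)))) hneg))
    have hnonpos : ∀ p q, t p q ≤ 0 := by
      intro p q
      by_cases hp : p ∈ S <;> by_cases hq : q ∈ S
      · simp only [ht, ha]; simp [hp, hq]
      · exact (hcross p q hp hq).1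
      · -- p ∉ S, q ∈ S : use symmetry
        have hsym : t p q = t q p := by
          simp only [ht]
          rw [hWs q p, hceven q p]
          ring
        rw [hsym]
        exact (hcross q p hq hp).1
      · simp only [ht, ha]; simp [hp, hq]
    have hsum0 : ∑ p, ∑ q, t p q = 0 := by
      have hle : ∑ p, ∑ q, t p q ≤ 0 :=
        Finset.sum_nonpos (fun p _ => Finset.sum_nonpos (fun q _ => hnonpos p q))
      linarith
    have hall : ∀ p ∈ Finset.univ, ∀ q ∈ Finset.univ, t p q = 0 := by
      have h1 := (Finset.sum_eq_zero_iff_of_nonpos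
        (fun p _ => Finset.sum_nonpos (fun q _ => hnonpos p q))).mp hsum0
      intro p hp q hq
      exact (Finset.sum_eq_zero_iff_of_nonpos (fun q _ => hnonpos p q)).mp
        (h1 p hp) q hq
    have hij0 : t i j = 0 := hall i (Finset.mem_univ i) j (Finset.mem_univ j)
    exact hj (hclosed i hi j ((hcross i j hi hj).2 hij0 hWij))
  -- lift the angles to an arc of length 2π − 2π/n
  have hne : Nonempty (Fin n) := Fin.pos_iff_nonempty.mp (by omega)
  set L : ℝ := 2 * π with hLdef
  have hL : 0 < L := by positivity
  set α : Fin n → ℝ := fun j => L * Int.fract (θ j / L) with hα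
  have hα0 : ∀ j, 0 ≤ α j ∧ α j < L := by
    intro j
    constructor
    · exact mul_nonneg hL.le (Int.fract_nonneg _)
    · have := Int.fract_lt_one (θ j / L)
      calc α j < L * 1 := by
            rw [hα]
            exact (mul_lt_mul_iff_right₀ hL).mpr this
        _ = L := mul_one L
  have hαmod : ∀ j, ∃ m : ℤ, α j = θ j + m * L := by
    intro j
    refine ⟨-⌊θ j / L⌋, ?_⟩
    have : Int.fract (θ j / L) = θ j / L - ⌊θ j / L⌋ := (Int.self_sub_floor (θ j / L)).symm
    simp only [hα, this]
    push_cast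
    field_simp
    ring
  set A : Finset ℝ := Finset.image α Finset.univ with hA
  have hAne : A.Nonempty := ⟨α (Classical.arbitrary (Fin n)), by
    rw [hA]; exact Finset.mem_image_of_mem α (Finset.mem_univ _)⟩
  have hAcard : A.card ≤ n := le_trans (Finset.card_image_le) (by simp)
  obtain ⟨c, hcA, hgap⟩ := exists_gap hL hn A hAne hAcard (by
    intro x hx
    rw [hA] at hx
    obtain ⟨j, _, rfl⟩ := Finset.mem_image.mp hx
    exact hα0 j)
  have hc0 : 0 ≤ c ∧ c < L := by
    rw [hA] at hcA
    obtain ⟨j, _, rfl⟩ := Finset.mem_image.mp hcA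
    exact hα0 j
  set ψ : Fin n → ℝ := fun j => if c < α j then α j else α j + L with hψ
  have hmemA : ∀ j, α j ∈ A := fun j => by
    rw [hA]; exact Finset.mem_image_of_mem α (Finset.mem_univ _)
  have hψlow : ∀ j, c + L/n ≤ ψ j := by
    intro j
    simp only [hψ]
    by_cases h : c < α j
    · rw [if_pos h]
      by_contra hcon
      push_neg at hcon
      exact (hgap (α j) (hmemA j)).1 ⟨h, hcon⟩
    · rw [if_neg h]
      by_contra hcon
      push_neg at hcon
      have h1 : c < α j + L := by
        have := (hα0 j).1
        linarith [hc0.2]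
      exact (hgap (α j) (hmemA j)).2 ⟨h1, hcon⟩
  have hψhigh : ∀ j, ψ j ≤ c + L := by
    intro j
    simp only [hψ]
    by_cases h : c < α j
    · rw [if_pos h]
      linarith [(hα0 j).2, hc0.1]
    · rw [if_neg h]
      push_neg at h
      linarith
  have hψmod : ∀ j, ∃ m : ℤ, ψ j = θ j + m * L := by
    intro j
    obtain ⟨m, hm⟩ := hαmod j
    simp only [hψ]
    by_cases h : c < α j
    · exact ⟨m, by rw [if_pos h]; exact hm⟩
    · exact ⟨m + 1, by rw [if_neg h, hm]; push_cast; ring⟩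
  have htcos : ∀ i j, Real.cos (θ i - θ j) = Real.cos (ψ i - ψ j) := by
    intro i j
    obtain ⟨mi, hmi⟩ := hψmod i
    obtain ⟨mj, hmj⟩ := hψmod j
    rw [show ψ i - ψ j = (θ i - θ j) + ((mi - mj : ℤ) : ℝ) * (2 * π) by
      rw [hmi, hmj, hLdef]; push_cast; ring]
    rw [Real.cos_add_int_mul_two_pi]
  have htsin : ∀ i j, Real.sin (θ i - θ j) = Real.sin (ψ i - ψ j) := by
    intro i j
    obtain ⟨mi, hmi⟩ := hψmod i
    obtain ⟨mj, hmj⟩ := hψmod j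
    rw [show ψ i - ψ j = (θ i - θ j) + ((mi - mj : ℤ) : ℝ) * (2 * π) by
      rw [hmi, hmj, hLdef]; push_cast; ring]
    rw [Real.sin_add_int_mul_two_pi]
  -- edges are short in the lift
  have hedge : ∀ i j, E i j → |ψ i - ψ j| < π/n := by
    intro i j hEij
    by_contra hge
    push_neg at hge
    have hsp : |ψ i - ψ j| ≤ 2*π - 2*π/n := by
      have h1 := hψhigh i
      have h2 := hψlow j
      have h3 := hψhigh j
      have h4 := hψlow i
      rw [hLdef] at h1 h2 h3 h4
      rw [abs_sub_le_iff]
      constructor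
      · linarith
      · linarith
    have hpn2 : 2*π/(n:ℝ) = π/n + π/n := by ring
    have hkey := key_ineq hn hβ (u := |ψ i - ψ j|) hge (by
      have hpn : 0 < π/(n:ℝ) := by positivity
      linarith)
    have hcc : Real.cos |ψ i - ψ j| = Real.cos (θ i - θ j) := by
      rw [Real.cos_abs, ← htcos]
    have hq := Real.sin_sq_add_cos_sq |ψ i - ψ j|
    rw [hcc] at hq hkey
    have hcond := hEij.2
    nlinarith
  -- spread bound
  obtain ⟨i₀, -, hmin⟩ := Finset.exists_min_image Finset.univ ψ ⟨Classical.arbitrary (Fin n),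
    Finset.mem_univ _⟩
  have hδpos : 0 < π/(n:ℝ) := by positivity
  have hspread := spread_lemma hn ψ E (π/n) hδpos hedge hEprop i₀
  have hnpi : (n:ℝ) * (π/n) = π := by field_simp
  rw [hnpi] at hspread
  -- minimal-angle propagation using criticality
  set Smin : Finset (Fin n) := Finset.univ.filter (fun j => ψ j = ψ i₀) with hSmin
  have hSuniv : Smin = Finset.univ := by
    apply hWclosed
    · exact ⟨i₀, by rw [hSmin]; simp⟩
    · intro i hi j hWij
      rw [hSmin, Finset.mem_filter] at hi
      have hψi : ψ i = ψ i₀ := hi.2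
      have hcriti := crit_sum β W θ X hθ0 hθ1 hcrit i
      have hnn : ∀ q ∈ Finset.univ,
          0 ≤ (W q i * Real.exp (β * Real.cos (θ q - θ i))) * Real.sin (θ q - θ i) := by
        intro q _
        apply mul_nonneg
        · exact mul_nonneg (hWnonneg q i) (Real.exp_pos _).le
        · rw [htsin]
          apply Real.sin_nonneg_of_nonneg_of_le_pi
          · rw [hψi]
            have := hmin q (Finset.mem_univ q)
            linarith
          · have := hspread q
            rw [← hψi] at this
            linarith
      have hz := (Finset.sum_eq_zero_iff_of_nonneg hnn).mp hcriti j (Finset.mem_univ j)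
      have hWji : 0 < W j i := by rw [hWs]; exact hWij
      have hsin0 : Real.sin (ψ j - ψ i) = 0 := by
        rw [← htsin]
        have hexpp := Real.exp_pos (β * Real.cos (θ j - θ i))
        by_contra hs
        rcases lt_or_gt_of_ne hs with h | h
        · exact absurd hz (ne_of_lt (mul_neg_of_pos_of_neg (mul_pos hWji hexpp) h))
        · exact absurd hz (ne_of_gt (mul_pos (mul_pos hWji hexpp) h))
      have hdiff : ψ j - ψ i = 0 := by
        rw [← Real.sin_eq_zero_iff_of_lt_of_lt ?_ ?_]
        · exact hsin0
        · have := hmin j (Finset.mem_univ j)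
          rw [← hψi] at this
          linarith
        · have := hspread j
          rw [← hψi] at this
          linarith
      rw [hSmin, Finset.mem_filter]
      exact ⟨Finset.mem_univ j, by rw [← hψi]; linarith⟩
  have hψall : ∀ j, ψ j = ψ i₀ := by
    intro j
    have : j ∈ Smin := hSuniv ▸ Finset.mem_univ j
    rw [hSmin, Finset.mem_filter] at this
    exact this.2
  -- conclude columns equal
  intro j j' i
  have hcosψ : ∀ p, Real.cos (θ p) = Real.cos (ψ p) := by
    intro p
    obtain ⟨m, hm⟩ := hψmod p
    rw [hm, hLdef, Real.cos_add_int_mul_two_pi]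
  have hsinψ : ∀ p, Real.sin (θ p) = Real.sin (ψ p) := by
    intro p
    obtain ⟨m, hm⟩ := hψmod p
    rw [hm, hLdef, Real.sin_add_int_mul_two_pi]
  fin_cases i
  · show X 0 j = X 0 j'
    rw [hθ0 j, hθ0 j', hcosψ j, hcosψ j', hψall j, hψall j']
  · show X 1 j = X 1 j'
    rw [hθ1 j, hθ1 j', hsinψ j, hsinψ j', hψall j, hψall j']
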